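/- arXiv:1011.1848 — 4 statements merged into one kernel-verified Lean document; each statement's English description precedes it below -/
import Mathlib

section
/- Define the big q-Hermite polynomials by H_n(x|a,q) = ∑_{i=0}^{n} [n choose i]_q q^{binom(i,2)} (-a)^i H_{n-i}(x|q), where H_m(x|q) are the continuous q-Hermite polynomials. Then the inverse relation holds: H_n(x|q) = ∑_{i=0}^{n} [n choose i]_q a^i H_{n-i}(x|a,q) for all n ≥ 0. -/
noncomputable def qint (q : ℝ) (n : ℕ) : ℝ := ∑ i ∈ Finset.range n, q ^ i

noncomputable def qfact (q : ℝ) (n : ℕ) : ℝ := ∏ i ∈ Finset.range n, qint q (i + 1)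

noncomputable def qPoch (a q : ℝ) (n : ℕ) : ℝ := ∏ i ∈ Finset.range n, (1 - a * q ^ i)

/-- Gaussian binomial coefficient as a polynomial in `q`, via the Pascal-type recurrence. -/
noncomputable def qbinom (q : ℝ) : ℕ → ℕ → ℝ
  | _, 0 => 1
  | 0, _ + 1 => 0
  | n + 1, k + 1 => qbinom q n k + q ^ (k + 1) * qbinom q n (k + 1)

/-- Rescaled continuous q-Hermite polynomials `H_n(x|q)`. -/
noncomputable def qHermite (q x : ℝ) : ℕ → ℝ
  | 0 => 1
  | 1 => x
  | n + 2 => x * qHermite q x (n + 1) - qint q (n + 1) * qHermite q x n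

/-- Chebyshev polynomials of the second kind. -/
noncomputable def Ucheb (x : ℝ) : ℕ → ℝ
  | 0 => 1
  | 1 => 2 * x
  | n + 2 => 2 * x * Ucheb x (n + 1) - Ucheb x n

/-- Probabilist's Hermite polynomials. -/
noncomputable def He (x : ℝ) : ℕ → ℝ
  | 0 => 1
  | 1 => x
  | n + 2 => x * He x (n + 1) - (n + 1 : ℝ) * He x n

/-- Big q-Hermite polynomials `H_n(x|a,q)`. -/
noncomputable def bigH (q a x : ℝ) (n : ℕ) : ℝ :=
  ∑ i ∈ Finset.range (n + 1),
    qbinom q n i * q ^ (i.choose 2) * (-a) ^ i * qHermite q x (n - i)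

/-- Al-Salam--Chihara polynomials `P_n(x|y,ρ,q)`. -/
noncomputable def ASC (q x y ρ : ℝ) : ℕ → ℝ
  | 0 => 1
  | 1 => x - ρ * y
  | n + 2 =>
      (x - ρ * y * q ^ (n + 1)) * ASC q x y ρ (n + 1)
        - qint q (n + 1) * (1 - ρ ^ 2 * q ^ n) * ASC q x y ρ n

/-- Auxiliary polynomials `B_n(x|q)`. -/
noncomputable def Bpoly (q x : ℝ) : ℕ → ℝ
  | 0 => 1
  | 1 => -x
  | n + 2 => -q ^ (n + 1) * x * Bpoly q x (n + 1) + q ^ n * qint q (n + 1) * Bpoly q x n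

lemma qbinom_zero_right (q : ℝ) (n : ℕ) : qbinom q n 0 = 1 := by cases n <;> rfl

lemma qbinom_succ_succ (q : ℝ) (n k : ℕ) :
    qbinom q (n+1) (k+1) = qbinom q n k + q ^ (k+1) * qbinom q n (k+1) := rfl

lemma qbinom_eq_zero (q : ℝ) : ∀ n k, n < k → qbinom q n k = 0 := by
  intro n
  induction n with
  | zero => intro k hk; obtain ⟨k', rfl⟩ : ∃ k', k = k'+1 := ⟨k-1, by omega⟩; rfl
  | succ n ih =>
    intro k hk
    obtain ⟨k', rfl⟩ : ∃ k', k = k'+1 := ⟨k-1, by omega⟩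
    rw [qbinom_succ_succ, ih k' (by omega), ih (k'+1) (by omega)]
    ring

lemma qbinom_self (q : ℝ) (n : ℕ) : qbinom q n n = 1 := by
  induction n with
  | zero => rfl
  | succ n ih => rw [qbinom_succ_succ, ih, qbinom_eq_zero q n (n+1) (by omega)]; ring

lemma qbinom_mul (q : ℝ) : ∀ n m i, i ≤ m →
    qbinom q n m * qbinom q m i = qbinom q n i * qbinom q (n-i) (m-i) := by
  intro n
  induction n with
  | zero =>
    intro m i him
    rcases Nat.eq_zero_or_pos m with rfl | hm
    · interval_cases i; simp [qbinom_zero_right]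
    rcases Nat.eq_zero_or_pos i with rfl | hi
    · simp [qbinom_zero_right]
    rw [qbinom_eq_zero q 0 m (by omega)]
    rcases eq_or_lt_of_le him with rfl | him'
    · rw [qbinom_eq_zero q 0 i (by omega)]; ring
    · rw [qbinom_eq_zero q (0-i) (m-i) (by omega)]; ring
  | succ n ih =>
    intro m i him
    rcases Nat.eq_zero_or_pos i with rfl | hi
    · simp [qbinom_zero_right]
    rcases eq_or_lt_of_le him with rfl | him'
    · rw [qbinom_self, Nat.sub_self, qbinom_zero_right]
    obtain ⟨m', rfl⟩ : ∃ m', m = m'+1 := ⟨m-1, by omega⟩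
    obtain ⟨i', rfl⟩ : ∃ i', i = i'+1 := ⟨i-1, by omega⟩
    have hi'm' : i'+1 ≤ m' := by omega
    by_cases hmn : m' ≤ n
    · -- main case
      have e1 : n + 1 - (i'+1) = (n - (i'+1)) + 1 := by omega
      have e2 : m' + 1 - (i'+1) = (m' - (i'+1)) + 1 := by omega
      have e3 : m' - i' = (m' - (i'+1)) + 1 := by omega
      have e4 : n - i' = (n - (i'+1)) + 1 := by omega
      rw [qbinom_succ_succ q n m', qbinom_succ_succ q m' i', qbinom_succ_succ q n i',
        e1, e2, qbinom_succ_succ q (n - (i'+1)) (m' - (i'+1))]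
      have h1 := ih m' i' (by omega)
      have h2 := ih m' (i'+1) hi'm'
      have h3 := ih (m'+1) (i'+1) him
      rw [e3, e4, qbinom_succ_succ q (n - (i'+1)) (m' - (i'+1))] at h1
      rw [qbinom_succ_succ q m' i', e2] at h3
      have hp : q ^ (i'+1) * q ^ ((m' - (i'+1)) + 1) = q ^ (m'+1) := by
        rw [← pow_add]; congr 1; omega
      linear_combination h1 + q^(i'+1) * h2 + q^(m'+1) * h3
        - qbinom q n (i'+1) * qbinom q (n-(i'+1)) (m'-(i'+1)+1) * hp
    · -- m' > n : both sides vanish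
      rw [qbinom_eq_zero q (n+1) (m'+1) (by omega)]
      by_cases hin : i'+1 ≤ n+1
      · rw [qbinom_eq_zero q (n+1-(i'+1)) (m'+1-(i'+1)) (by omega)]; ring
      · rw [qbinom_eq_zero q (n+1) (i'+1) (by omega)]; ring

lemma choose2_succ (t : ℕ) : (t+1).choose 2 = t.choose 2 + t := by
  have : (t+1).choose 2 = t.choose 1 + t.choose 2 := rfl
  rw [this, Nat.choose_one_right]; omega

noncomputable def Gsum (q : ℝ) (m : ℕ) : ℝ :=
  ∑ i ∈ Finset.range (m+1), qbinom q m i * (-1:ℝ)^(m-i) * q^((m-i).choose 2)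

lemma Gsum_zero (q : ℝ) : Gsum q 0 = 1 := by simp [Gsum, qbinom_zero_right]

lemma Gsum_succ (q : ℝ) (m : ℕ) : Gsum q (m+1) = (1 - q^m) * Gsum q m := by
  rw [Gsum, Finset.sum_range_succ']
  have hsplit : ∀ k ∈ Finset.range (m+1),
      qbinom q (m+1) (k+1) * (-1:ℝ)^(m+1-(k+1)) * q^((m+1-(k+1)).choose 2)
        = qbinom q m k * (-1:ℝ)^(m-k) * q^((m-k).choose 2)
          + q^(k+1) * qbinom q m (k+1) * (-1:ℝ)^(m-k) * q^((m-k).choose 2) := by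
    intro k hk
    rw [qbinom_succ_succ]
    have : m + 1 - (k+1) = m - k := by omega
    rw [this]; ring
  rw [Finset.sum_congr rfl hsplit, Finset.sum_add_distrib]
  have hP2 : ∑ k ∈ Finset.range (m+1),
      q^(k+1) * qbinom q m (k+1) * (-1:ℝ)^(m-k) * q^((m-k).choose 2)
      = -q^m * (Gsum q m - (-1:ℝ)^m * q^(m.choose 2)) := by
    rw [Finset.sum_range_succ, qbinom_eq_zero q m (m+1) (by omega)]
    have hterm : ∀ k ∈ Finset.range m,
        q^(k+1) * qbinom q m (k+1) * (-1:ℝ)^(m-k) * q^((m-k).choose 2)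
          = -q^m * (qbinom q m (k+1) * (-1:ℝ)^(m-(k+1)) * q^((m-(k+1)).choose 2)) := by
      intro k hk
      simp only [Finset.mem_range] at hk
      have e1 : m - k = (m - (k+1)) + 1 := by omega
      have e2 : q^(k+1) * q^((m-(k+1)) + 1).choose 2 = q^m * q^((m-(k+1)).choose 2) := by
        rw [← pow_add, ← pow_add, choose2_succ]
        congr 1
        omega
      rw [e1]
      linear_combination (-(qbinom q m (k+1)) * (-1:ℝ)^(m-(k+1))) * e2
    rw [Finset.sum_congr rfl hterm, ← Finset.mul_sum]
    have hG : Gsum q m = (∑ k ∈ Finset.range m,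
        qbinom q m (k+1) * (-1:ℝ)^(m-(k+1)) * q^((m-(k+1)).choose 2))
        + qbinom q m 0 * (-1:ℝ)^(m-0) * q^((m-0).choose 2) := by
      rw [Gsum, Finset.sum_range_succ']
    rw [hG, qbinom_zero_right]
    simp only [Nat.sub_zero]
    ring
  rw [hP2, qbinom_zero_right]
  have e3 : q^m * q^(m.choose 2) = q^((m+1).choose 2) := by
    rw [← pow_add, choose2_succ]
    congr 1
    omega
  have e4 : m + 1 - 0 = m + 1 := by omega
  rw [e4]
  rw [show (∑ x ∈ Finset.range (m+1),
      qbinom q m x * (-1:ℝ)^(m-x) * q^((m-x).choose 2)) = Gsum q m from rfl]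
  linear_combination ((-1:ℝ)^m) * e3

lemma Gsum_eq (q : ℝ) (m : ℕ) : Gsum q m = if m = 0 then 1 else 0 := by
  induction m with
  | zero => simpa using Gsum_zero q
  | succ m ih =>
    rw [Gsum_succ, ih]
    rcases Nat.eq_zero_or_pos m with rfl | hm
    · simp
    · simp [Nat.pos_iff_ne_zero.mp hm]

lemma sum_triangle (F : ℕ → ℕ → ℝ) (n : ℕ) :
    ∑ i ∈ Finset.range (n+1), ∑ j ∈ Finset.range (n+1-i), F i j
      = ∑ m ∈ Finset.range (n+1), ∑ i ∈ Finset.range (m+1), F i (m-i) := by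
  induction n with
  | zero => simp
  | succ n ih =>
    have peel : ∀ i ∈ Finset.range (n+1), ∑ j ∈ Finset.range (n+1+1-i), F i j
        = (∑ j ∈ Finset.range (n+1-i), F i j) + F i (n+1-i) := by
      intro i hi
      simp only [Finset.mem_range] at hi
      have : n+1+1-i = (n+1-i)+1 := by omega
      rw [this, Finset.sum_range_succ]
    have L : ∑ i ∈ Finset.range (n+1+1), ∑ j ∈ Finset.range (n+1+1-i), F i j
        = (∑ i ∈ Finset.range (n+1), ∑ j ∈ Finset.range (n+1-i), F i j)
          + ∑ i ∈ Finset.range (n+1+1), F i (n+1-i) := by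
      rw [Finset.sum_range_succ (fun i => ∑ j ∈ Finset.range (n+1+1-i), F i j) (n+1),
        Finset.sum_congr rfl peel, Finset.sum_add_distrib,
        Finset.sum_range_succ (fun i => F i (n+1-i)) (n+1)]
      have h1 : n+1+1-(n+1) = 1 := by omega
      rw [h1, Finset.sum_range_one, Nat.sub_self]
      ring
    rw [L, ih, Finset.sum_range_succ (fun m => ∑ i ∈ Finset.range (m+1), F i (m-i)) (n+1)]

theorem qHermite_eq_sum_bigH (q a x : ℝ) (n : ℕ) :
    qHermite q x n =
      ∑ i ∈ Finset.range (n + 1), qbinom q n i * a ^ i * bigH q a x (n - i) := by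
  have step1 : ∑ i ∈ Finset.range (n+1), qbinom q n i * a ^ i * bigH q a x (n - i)
      = ∑ i ∈ Finset.range (n+1), ∑ j ∈ Finset.range (n+1-i),
          qbinom q n i * a ^ i *
            (qbinom q (n-i) j * q ^ (j.choose 2) * (-a) ^ j * qHermite q x (n - i - j)) := by
    refine Finset.sum_congr rfl fun i hi => ?_
    simp only [Finset.mem_range] at hi
    rw [bigH, Finset.mul_sum]
    have h : n - i + 1 = n + 1 - i := by omega
    rw [h]
  have step2 := sum_triangle (fun i j => qbinom q n i * a ^ i *
      (qbinom q (n-i) j * q ^ (j.choose 2) * (-a) ^ j * qHermite q x (n - i - j))) n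
  beta_reduce at step2
  rw [step1, step2]
  have step3 : ∀ m ∈ Finset.range (n+1),
      ∑ i ∈ Finset.range (m+1), qbinom q n i * a ^ i *
        (qbinom q (n-i) (m-i) * q ^ ((m-i).choose 2) * (-a) ^ (m-i)
          * qHermite q x (n - i - (m-i)))
      = qbinom q n m * a ^ m * qHermite q x (n-m) * Gsum q m := by
    intro m hm
    simp only [Finset.mem_range] at hm
    rw [Gsum, Finset.mul_sum]
    refine Finset.sum_congr rfl fun i hi => ?_
    simp only [Finset.mem_range] at hi
    have h1 : n - i - (m - i) = n - m := by omega
    have h2 : qbinom q n i * qbinom q (n-i) (m-i) = qbinom q n m * qbinom q m i :=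
      (qbinom_mul q n m i (by omega)).symm
    have h3 : (-a:ℝ)^(m-i) = (-1:ℝ)^(m-i) * a^(m-i) := by
      rw [neg_pow]
    have h4 : a^i * a^(m-i) = a^m := by
      rw [← pow_add]; congr 1; omega
    rw [h1, h3]
    linear_combination
      (q ^ ((m-i).choose 2) * (-1:ℝ)^(m-i) * qHermite q x (n-m) * a^i * a^(m-i)) * h2
      + (q ^ ((m-i).choose 2) * (-1:ℝ)^(m-i) * qHermite q x (n-m)
          * qbinom q n m * qbinom q m i) * h4
  rw [Finset.sum_congr rfl step3]
  have step4 : (∑ m ∈ Finset.range (n+1),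
        qbinom q n m * a ^ m * qHermite q x (n-m) * Gsum q m)
      = ∑ m ∈ Finset.range (n+1),
          qbinom q n m * a ^ m * qHermite q x (n-m) * (if m = 0 then (1:ℝ) else 0) :=
    Finset.sum_congr rfl fun m _ => by rw [Gsum_eq]
  rw [step4]
  simp only [mul_ite, mul_one, mul_zero]
  rw [Finset.sum_ite_eq' (Finset.range (n+1)) 0
    (fun m => qbinom q n m * a ^ m * qHermite q x (n-m))]
  simp [qbinom_zero_right]
end

section
/- The Al-Salam–Chihara polynomials at q = 0 satisfy P_n(x|y,ρ,0) = U_n(x/2) - ρy U_{n-1}(x/2) + ρ² U_{n-2}(x/2) for all n ≥ 1, where U_n are the Chebyshev polynomials of the second kind with U_{-1} = 0. -/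
lemma qint_zero_succ (n : ℕ) : qint 0 (n + 1) = 1 := by
  unfold qint
  rw [Finset.sum_eq_single 0]
  · simp
  · intro i _ hi; simp [zero_pow hi]
  · simp

lemma Ucheb_rec (x : ℝ) (n : ℕ) :
    Ucheb (x / 2) (n + 2) = x * Ucheb (x / 2) (n + 1) - Ucheb (x / 2) n := by
  show 2 * (x / 2) * _ - _ = _
  ring_nf

lemma ASC_aux (x y ρ : ℝ) : ∀ n : ℕ,
    ASC 0 x y ρ (n + 1) =
      Ucheb (x / 2) (n + 1) - ρ * y * Ucheb (x / 2) n
        + ρ ^ 2 * (if n = 0 then 0 else Ucheb (x / 2) (n - 1))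
  | 0 => by simp [ASC, Ucheb]; ring
  | 1 => by
      simp only [ASC, qint_zero_succ]
      simp [Ucheb]; ring
  | (n + 2) => by
      have h1 := ASC_aux x y ρ (n + 1)
      have h2 := ASC_aux x y ρ n
      show (x - ρ * y * 0 ^ (n + 2)) * ASC 0 x y ρ (n + 2)
          - qint 0 (n + 2) * (1 - ρ ^ 2 * 0 ^ (n + 1)) * ASC 0 x y ρ (n + 1) = _
      rw [qint_zero_succ, h1, h2, zero_pow (by omega : n + 2 ≠ 0),
        zero_pow (by omega : n + 1 ≠ 0)]
      have e3 : Ucheb (x / 2) (n + 3) = x * Ucheb (x / 2) (n + 2) - Ucheb (x / 2) (n + 1) :=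
        Ucheb_rec x (n + 1)
      have e2 : Ucheb (x / 2) (n + 2) = x * Ucheb (x / 2) (n + 1) - Ucheb (x / 2) n :=
        Ucheb_rec x n
      rw [if_neg (by omega : n + 1 ≠ 0), if_neg (by omega : n + 2 ≠ 0),
        e3, e2]
      simp only [Nat.add_sub_cancel]
      rcases n with _ | m
      · simp [Ucheb]; ring
      · simp only [if_neg (by omega : m + 1 ≠ 0), Nat.add_sub_cancel,
          show m + 1 + 2 - 1 = m + 2 from rfl, show m + 1 - 1 = m from rfl]
        rw [Ucheb_rec x m]
        ring

theorem ASC_q_zero (x y ρ : ℝ) (n : ℕ) (hn : 1 ≤ n) :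
    ASC 0 x y ρ n =
      Ucheb (x / 2) n - ρ * y * Ucheb (x / 2) (n - 1)
        + ρ ^ 2 * (if n = 1 then 0 else Ucheb (x / 2) (n - 2)) := by
  obtain ⟨m, rfl⟩ : ∃ m, n = m + 1 := ⟨n - 1, by omega⟩
  rw [ASC_aux]
  simp only [Nat.add_sub_cancel, show ∀ m:ℕ, m + 1 - 2 = m - 1 from fun m => rfl]
  congr 2
  by_cases h : m = 0 <;> simp [h]
end

section
/- For all n ≥ 0 and all real x, y, z, ρ₁, ρ₂, q: P_n(x | y, ρ₁ρ₂, q) = ∑_{i=0}^n [n choose i]_q ρ₁^{n-i} P_i(x | z, ρ₁, q) P_{n-i}(z | y, ρ₂, q), a composition/connection formula for Al-Salam–Chihara polynomials. -/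
lemma qint_zero (q : ℝ) : qint q 0 = 0 := by simp [qint]
lemma qint_succ (q : ℝ) (n : ℕ) : qint q (n + 1) = 1 + q * qint q n := by
  simp [qint, Finset.sum_range_succ', Finset.mul_sum, pow_succ, mul_comm]
  ring
lemma qint_succ' (q : ℝ) (n : ℕ) : qint q (n + 1) = qint q n + q ^ n := by
  simp [qint, Finset.sum_range_succ]
lemma pascal (q : ℝ) (n k : ℕ) : qbinom q (n+1) (k+1) = qbinom q n k + q ^ (k + 1) * qbinom q n (k + 1) := rfl
lemma L1 (q : ℝ) : ∀ n i, qbinom q (n+1) (i+1) * qint q (i+1) = qint q (n+1) * qbinom q n i := by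
  intro n
  induction n with
  | zero =>
    intro i
    cases i with
    | zero => simp [qbinom, qint]
    | succ j => simp [qbinom, qbinom_eq_zero q 0 (j+1) (by omega), qbinom_eq_zero q 0 (j+2) (by omega)]
  | succ m ih =>
    intro i
    cases i with
    | zero =>
      have h0 := ih 0
      rw [qbinom_zero_right] at h0
      have e1 : qint q 1 = 1 := by simp [qint]
      rw [pascal, qbinom_zero_right, qint_succ q (m+1)]
      simp only [zero_add] at h0 ⊢
      rw [e1] at h0 ⊢
      linear_combination q * h0
    | succ j =>
      have h1 := ih j
      have h2 := ih (j+1)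
      have hp := pascal q m j
      rw [qint_succ q (j+1)] at h2
      rw [pascal q (m+1) (j+1), qint_succ q (j+1), qint_succ q (m+1)]
      linear_combination q * h1 + q^(j+2) * h2 - q * qint q (m+1) * hp

lemma L2 (q : ℝ) : ∀ n i, qbinom q (n+1) i * qint q (n+1-i) = qint q (n+1) * qbinom q n i := by
  intro n
  induction n with
  | zero =>
    intro i
    match i with
    | 0 => simp [qbinom_zero_right, qint]
    | 1 => simp [qbinom, qint]
    | (j+2) => simp [qbinom_eq_zero q 1 (j+2) (by omega), qbinom_eq_zero q 0 (j+2) (by omega)]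
  | succ m ih =>
    intro i
    cases i with
    | zero =>
      simp [qbinom_zero_right]
    | succ k =>
      by_cases hk : k ≤ m
      · have h1 := ih k
        have h2 := ih (k+1)
        have hp := pascal q m k
        have hs : qint q (m+1-k) = qint q (m-k) + q^(m-k) := by
          have : m+1-k = (m-k)+1 := by omega
          rw [this, qint_succ']
        have hq : q^(k+1) * q^(m-k) = q^(m+1) := by
          rw [← pow_add]; congr 1; omega
        have e1 : m + 1 + 1 - (k+1) = m + 1 - k := by omega
        have e2 : m + 1 - (k+1) = m - k := by omega
        rw [e1, pascal q (m+1) k, qint_succ' q (m+1), hs]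
        rw [e2] at h2
        linear_combination h1 - qbinom q (m+1) k * hs + q^(k+1) * h2 + qbinom q (m+1) (k+1) * hq - qint q (m+1) * hp
      · have hz1 : qbinom q (m+1) (k+1) = 0 := qbinom_eq_zero q _ _ (by omega)
        have hz2 : qint q (m+1+1-(k+1)) = 0 := by
          have : m+1+1-(k+1) = 0 := by omega
          rw [this, qint_zero]
        rw [hz1, hz2]; ring


lemma ASC_succ (q x y ρ : ℝ) (i : ℕ) :
    ASC q x y ρ (i+1) =
      (x - ρ * y * q ^ i) * ASC q x y ρ i
        - qint q i * (1 - ρ ^ 2 * q ^ (i-1)) * ASC q x y ρ (i-1) := by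
  cases i with
  | zero => simp [ASC, qint_zero]
  | succ j => rfl

lemma term_split (q x y z ρ₁ ρ₂ : ℝ) (n i : ℕ) (hin : i ≤ n+1) :
    qbinom q (n+1) i * ρ₁^(n+1-i) * ASC q x z ρ₁ (i+1) * ASC q z y ρ₂ (n+1-i)
      + q^i * (qbinom q (n+1) i * ρ₁^(n+2-i) * ASC q x z ρ₁ i * ASC q z y ρ₂ (n+2-i))
    = (x - ρ₁*ρ₂*y*q^(n+1)) * (qbinom q (n+1) i * ρ₁^(n+1-i) * ASC q x z ρ₁ i * ASC q z y ρ₂ (n+1-i))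
      - qbinom q (n+1) i * ρ₁^(n+1-i) * qint q i * (1-ρ₁^2*q^(i-1)) * ASC q x z ρ₁ (i-1) * ASC q z y ρ₂ (n+1-i)
      - q^i * ρ₁ * qbinom q (n+1) i * ρ₁^(n+1-i) * qint q (n+1-i) * (1-ρ₂^2*q^(n-i)) * ASC q x z ρ₁ i * ASC q z y ρ₂ (n-i) := by
  have e1 : n+2-i = (n+1-i)+1 := by omega
  have e2 : (n+1-i)-1 = n-i := by omega
  have hq : q^i * q^(n+1-i) = q^(n+1) := by rw [← pow_add]; congr 1; omega
  have hρ : ρ₁^(n+2-i) = ρ₁^(n+1-i) * ρ₁ := by rw [e1, pow_succ]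
  rw [ASC_succ q x z ρ₁ i, e1, ASC_succ q z y ρ₂ (n+1-i), e2]
  linear_combination (-(ρ₁ * qbinom q (n+1) i * ρ₁^(n+1-i) * ρ₂ * y * ASC q x z ρ₁ i * ASC q z y ρ₂ (n+1-i))) * hq

lemma coeff_combine (q ρ₁ ρ₂ A B : ℝ) (n i : ℕ) (hin : i ≤ n) :
    qbinom q (n+1) (i+1) * ρ₁^(n-i) * qint q (i+1) * (1-ρ₁^2*q^i) * A * B
      + q^i * ρ₁ * (qbinom q (n+1) i * (ρ₁^(n-i) * ρ₁) * qint q (n+1-i) * (1-ρ₂^2*q^(n-i))) * A * B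
    = qint q (n+1) * (1-(ρ₁*ρ₂)^2*q^n) * (qbinom q n i * ρ₁^(n-i) * A * B) := by
  have h1 := L1 q n i
  have h2 := L2 q n i
  have hq : q^i * q^(n-i) = q^n := by rw [← pow_add]; congr 1; omega
  linear_combination (ρ₁^(n-i) * (1-ρ₁^2*q^i) * A * B) * h1
    + (q^i * ρ₁^2 * ρ₁^(n-i) * (1-ρ₂^2*q^(n-i)) * A * B) * h2
    - (ρ₁^2*ρ₂^2 * qint q (n+1) * qbinom q n i * ρ₁^(n-i) * A * B) * hq

lemma Skey (q x y z ρ₁ ρ₂ : ℝ) (n : ℕ) :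
    ∑ i ∈ Finset.range (n+3), qbinom q (n+2) i * ρ₁^(n+2-i) * ASC q x z ρ₁ i * ASC q z y ρ₂ (n+2-i)
    = (x - ρ₁*ρ₂*y*q^(n+1)) * (∑ i ∈ Finset.range (n+2), qbinom q (n+1) i * ρ₁^(n+1-i) * ASC q x z ρ₁ i * ASC q z y ρ₂ (n+1-i))
      - qint q (n+1) * (1-(ρ₁*ρ₂)^2*q^n) * (∑ i ∈ Finset.range (n+1), qbinom q n i * ρ₁^(n-i) * ASC q x z ρ₁ i * ASC q z y ρ₂ (n-i)) := by
  set a : ℕ → ℝ := ASC q x z ρ₁ with ha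
  set b : ℕ → ℝ := ASC q z y ρ₂ with hb
  -- step 1 : peel off the i = 0 term and apply Pascal
  have step1 : ∑ i ∈ Finset.range (n+3), qbinom q (n+2) i * ρ₁^(n+2-i) * a i * b (n+2-i)
      = (∑ i ∈ Finset.range (n+2),
          (qbinom q (n+1) i * ρ₁^(n+1-i) * a (i+1) * b (n+1-i)
            + q^(i+1) * qbinom q (n+1) (i+1) * ρ₁^(n+1-i) * a (i+1) * b (n+1-i)))
        + qbinom q (n+2) 0 * ρ₁^(n+2-0) * a 0 * b (n+2-0) := by
    rw [Finset.sum_range_succ']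
    congr 1
    refine Finset.sum_congr rfl fun i hi => ?_
    have e : n+2-(i+1) = n+1-i := by omega
    have hp : qbinom q (n+2) (i+1) = qbinom q (n+1) i + q^(i+1) * qbinom q (n+1) (i+1) :=
      pascal q (n+1) i
    rw [e, hp]; ring
  -- step 2 : re-shift the second family of terms
  have step2 : (∑ i ∈ Finset.range (n+2), q^(i+1) * qbinom q (n+1) (i+1) * ρ₁^(n+1-i) * a (i+1) * b (n+1-i))
        + qbinom q (n+2) 0 * ρ₁^(n+2-0) * a 0 * b (n+2-0)
      = ∑ i ∈ Finset.range (n+2), q^i * (qbinom q (n+1) i * ρ₁^(n+2-i) * a i * b (n+2-i)) := by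
    have h3 : ∑ i ∈ Finset.range (n+3), q^i * (qbinom q (n+1) i * ρ₁^(n+2-i) * a i * b (n+2-i))
        = (∑ i ∈ Finset.range (n+2), q^(i+1) * qbinom q (n+1) (i+1) * ρ₁^(n+1-i) * a (i+1) * b (n+1-i))
          + qbinom q (n+2) 0 * ρ₁^(n+2-0) * a 0 * b (n+2-0) := by
      rw [Finset.sum_range_succ']
      congr 1
      · refine Finset.sum_congr rfl fun i hi => ?_
        have e : n+2-(i+1) = n+1-i := by omega
        rw [e]; ring
      · simp [qbinom_zero_right, ha, ASC]
    rw [← h3, Finset.sum_range_succ, qbinom_eq_zero q (n+1) (n+2) (by omega)]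
    ring
  -- step 3 : expand each term via the three-term recurrences
  have step3 : ∑ i ∈ Finset.range (n+2),
        (qbinom q (n+1) i * ρ₁^(n+1-i) * a (i+1) * b (n+1-i)
          + q^i * (qbinom q (n+1) i * ρ₁^(n+2-i) * a i * b (n+2-i)))
      = ∑ i ∈ Finset.range (n+2),
        ((x - ρ₁*ρ₂*y*q^(n+1)) * (qbinom q (n+1) i * ρ₁^(n+1-i) * a i * b (n+1-i))
          - qbinom q (n+1) i * ρ₁^(n+1-i) * qint q i * (1-ρ₁^2*q^(i-1)) * a (i-1) * b (n+1-i)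
          - q^i * ρ₁ * qbinom q (n+1) i * ρ₁^(n+1-i) * qint q (n+1-i) * (1-ρ₂^2*q^(n-i)) * a i * b (n-i)) := by
    refine Finset.sum_congr rfl fun i hi => ?_
    exact term_split q x y z ρ₁ ρ₂ n i (by simpa using Finset.mem_range_succ_iff.mp hi)
  -- step 4 : the U1 sum
  have step4 : ∑ i ∈ Finset.range (n+2),
        qbinom q (n+1) i * ρ₁^(n+1-i) * qint q i * (1-ρ₁^2*q^(i-1)) * a (i-1) * b (n+1-i)
      = ∑ i ∈ Finset.range (n+1),
        qbinom q (n+1) (i+1) * ρ₁^(n-i) * qint q (i+1) * (1-ρ₁^2*q^i) * a i * b (n-i) := by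
    rw [Finset.sum_range_succ']
    have h0 : qbinom q (n+1) 0 * ρ₁^(n+1-0) * qint q 0 * (1-ρ₁^2*q^(0-1)) * a (0-1) * b (n+1-0) = 0 := by
      rw [qint_zero]; ring
    rw [h0, add_zero]
    refine Finset.sum_congr rfl fun i hi => ?_
    have e1 : n+1-(i+1) = n-i := by omega
    have e2 : i+1-1 = i := by omega
    rw [e1, e2]
  -- step 5 : the U2 sum
  have step5 : ∑ i ∈ Finset.range (n+2),
        q^i * ρ₁ * qbinom q (n+1) i * ρ₁^(n+1-i) * qint q (n+1-i) * (1-ρ₂^2*q^(n-i)) * a i * b (n-i)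
      = ∑ i ∈ Finset.range (n+1),
        q^i * ρ₁ * (qbinom q (n+1) i * (ρ₁^(n-i) * ρ₁) * qint q (n+1-i) * (1-ρ₂^2*q^(n-i))) * a i * b (n-i) := by
    rw [Finset.sum_range_succ]
    have h0 : qint q (n+1-(n+1)) = 0 := by
      rw [show n+1-(n+1) = 0 by omega, qint_zero]
    rw [h0]
    have : q^(n+1) * ρ₁ * qbinom q (n+1) (n+1) * ρ₁^(n+1-(n+1)) * 0 * (1-ρ₂^2*q^(n-(n+1))) * a (n+1) * b (n-(n+1)) = 0 := by ring
    rw [this, add_zero]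
    refine Finset.sum_congr rfl fun i hi => ?_
    have hi' : i ≤ n := by simpa using Finset.mem_range_succ_iff.mp hi
    have e : ρ₁^(n+1-i) = ρ₁^(n-i) * ρ₁ := by
      rw [show n+1-i = (n-i)+1 by omega, pow_succ]
    rw [e]; ring
  -- step 6 : combine the two lower sums
  have step6 : (∑ i ∈ Finset.range (n+1),
        qbinom q (n+1) (i+1) * ρ₁^(n-i) * qint q (i+1) * (1-ρ₁^2*q^i) * a i * b (n-i))
      + (∑ i ∈ Finset.range (n+1),
        q^i * ρ₁ * (qbinom q (n+1) i * (ρ₁^(n-i) * ρ₁) * qint q (n+1-i) * (1-ρ₂^2*q^(n-i))) * a i * b (n-i))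
      = qint q (n+1) * (1-(ρ₁*ρ₂)^2*q^n) *
          ∑ i ∈ Finset.range (n+1), qbinom q n i * ρ₁^(n-i) * a i * b (n-i) := by
    rw [← Finset.sum_add_distrib, Finset.mul_sum]
    refine Finset.sum_congr rfl fun i hi => ?_
    have hi' : i ≤ n := by simpa using Finset.mem_range_succ_iff.mp hi
    exact coeff_combine q ρ₁ ρ₂ (a i) (b (n-i)) n i hi'
  calc ∑ i ∈ Finset.range (n+3), qbinom q (n+2) i * ρ₁^(n+2-i) * a i * b (n+2-i)
      = ∑ i ∈ Finset.range (n+2),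
        (qbinom q (n+1) i * ρ₁^(n+1-i) * a (i+1) * b (n+1-i)
          + q^i * (qbinom q (n+1) i * ρ₁^(n+2-i) * a i * b (n+2-i))) := by
        rw [step1]
        rw [show (∑ i ∈ Finset.range (n+2),
          (qbinom q (n+1) i * ρ₁^(n+1-i) * a (i+1) * b (n+1-i)
            + q^(i+1) * qbinom q (n+1) (i+1) * ρ₁^(n+1-i) * a (i+1) * b (n+1-i)))
          = (∑ i ∈ Finset.range (n+2), qbinom q (n+1) i * ρ₁^(n+1-i) * a (i+1) * b (n+1-i))
            + ∑ i ∈ Finset.range (n+2), q^(i+1) * qbinom q (n+1) (i+1) * ρ₁^(n+1-i) * a (i+1) * b (n+1-i)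
          from Finset.sum_add_distrib]
        rw [add_assoc, step2, ← Finset.sum_add_distrib]
    _ = _ := by
        rw [step3]
        rw [show (∑ i ∈ Finset.range (n+2),
          ((x - ρ₁*ρ₂*y*q^(n+1)) * (qbinom q (n+1) i * ρ₁^(n+1-i) * a i * b (n+1-i))
            - qbinom q (n+1) i * ρ₁^(n+1-i) * qint q i * (1-ρ₁^2*q^(i-1)) * a (i-1) * b (n+1-i)
            - q^i * ρ₁ * qbinom q (n+1) i * ρ₁^(n+1-i) * qint q (n+1-i) * (1-ρ₂^2*q^(n-i)) * a i * b (n-i)))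
          = (∑ i ∈ Finset.range (n+2), (x - ρ₁*ρ₂*y*q^(n+1)) * (qbinom q (n+1) i * ρ₁^(n+1-i) * a i * b (n+1-i)))
            - (∑ i ∈ Finset.range (n+2), qbinom q (n+1) i * ρ₁^(n+1-i) * qint q i * (1-ρ₁^2*q^(i-1)) * a (i-1) * b (n+1-i))
            - (∑ i ∈ Finset.range (n+2), q^i * ρ₁ * qbinom q (n+1) i * ρ₁^(n+1-i) * qint q (n+1-i) * (1-ρ₂^2*q^(n-i)) * a i * b (n-i))
          from by rw [← Finset.sum_sub_distrib, ← Finset.sum_sub_distrib]]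
        rw [step4, step5, ← Finset.mul_sum, sub_sub, step6]


theorem ASC_composition (q x y z ρ₁ ρ₂ : ℝ) (n : ℕ) :
    ASC q x y (ρ₁ * ρ₂) n =
      ∑ i ∈ Finset.range (n + 1),
        qbinom q n i * ρ₁ ^ (n - i) * ASC q x z ρ₁ i * ASC q z y ρ₂ (n - i) := by
  induction n using Nat.twoStepInduction with
  | zero => simp [ASC, qbinom_zero_right]
  | one =>
    rw [Finset.sum_range_succ, Finset.sum_range_succ, Finset.sum_range_zero]
    norm_num [ASC, qbinom, qbinom_zero_right]
    ring
  | more n ih1 ih2 =>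
    have unf : ASC q x y (ρ₁*ρ₂) (n+2)
        = (x - (ρ₁*ρ₂)*y*q^(n+1)) * ASC q x y (ρ₁*ρ₂) (n+1)
          - qint q (n+1) * (1-(ρ₁*ρ₂)^2*q^n) * ASC q x y (ρ₁*ρ₂) n := rfl
    rw [unf, ih1, ih2]
    exact (Skey q x y z ρ₁ ρ₂ n).symm
end

section
/- For all n ≥ 1 and 0 ≤ q < 1, the continuous q-Hermite polynomial satisfies the bound max_{x ∈ S(q)} |H_n(x|q)| ≤ (1-q)^{-n/2} r_n(1|q), where S(q) = [-2/√(1-q), 2/√(1-q)] and r_n(1|q) = ∑_{i=0}^n [n choose i]_q. -/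
lemma qint_pos (q : ℝ) (hq : 0 ≤ q) (n : ℕ) : 0 < qint q (n + 1) := by
  unfold qint
  rw [Finset.sum_range_succ'] 
  have : 0 ≤ ∑ i ∈ Finset.range n, q ^ (i + 1) :=
    Finset.sum_nonneg fun i _ => pow_nonneg hq _
  simpa using by positivity

lemma qfact_pos (q : ℝ) (hq : 0 ≤ q) (n : ℕ) : 0 < qfact q n :=
  Finset.prod_pos fun i _ => qint_pos q hq i

lemma qint_split (q : ℝ) (n k : ℕ) (h : k ≤ n) :
    qint q (n + 1) = qint q (k + 1) + q ^ (k + 1) * qint q (n - k) := by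
  unfold qint
  have hnk : n + 1 = (k + 1) + (n - k) := by omega
  rw [hnk, Finset.sum_range_add, Finset.mul_sum]
  congr 1
  exact Finset.sum_congr rfl fun i _ => by rw [← pow_add]


lemma qfact_succ (q : ℝ) (n : ℕ) : qfact q (n + 1) = qfact q n * qint q (n + 1) :=
  Finset.prod_range_succ _ _

lemma qbinom_mul_qfact (q : ℝ) : ∀ n k, k ≤ n →
    qbinom q n k * (qfact q k * qfact q (n - k)) = qfact q n := by
  intro n
  induction n with
  | zero => intro k hk; interval_cases k; simp [qbinom_zero_right, qfact]
  | succ n ih =>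
    intro k hk
    cases k with
    | zero => simp [qbinom_zero_right, qfact]
    | succ k =>
      have hkn : k ≤ n := by omega
      show (qbinom q n k + q ^ (k + 1) * qbinom q n (k + 1)) *
          (qfact q (k + 1) * qfact q (n + 1 - (k + 1))) = qfact q (n + 1)
      have h1 : n + 1 - (k + 1) = n - k := by omega
      rw [h1, add_mul, qfact_succ q k]
      rcases eq_or_lt_of_le hkn with h2 | h2
      · subst h2
        rw [qbinom_eq_zero q k (k+1) (by omega)]
        have := ih k le_rfl
        simp only [Nat.sub_self] at this ⊢
        rw [qfact_succ]
        linear_combination qint q (k + 1) * this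
      · have h3 : n - k = (n - (k+1)) + 1 := by omega
        have e1 : qbinom q n k * (qfact q k * qint q (k + 1) * qfact q (n - k)) =
            qint q (k+1) * qfact q n := by
          rw [mul_comm (qfact q k) (qint q (k+1)), mul_assoc, mul_comm (qint q (k+1)),
            ← mul_assoc, ih k hkn]; ring
        have e2 : q ^ (k + 1) * qbinom q n (k + 1) *
            (qfact q k * qint q (k + 1) * qfact q (n - k)) =
            q ^ (k+1) * qint q (n - k) * qfact q n := by
          rw [h3, qfact_succ, ← h3]
          have := ih (k+1) (by omega)
          rw [← qfact_succ]
          calc q ^ (k + 1) * qbinom q n (k + 1) * (qfact q (k+1) * (qfact q (n - (k+1)) * qint q (n - k)))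
              = q ^ (k+1) * qint q (n-k) * (qbinom q n (k+1) * (qfact q (k+1) * qfact q (n - (k+1)))) := by ring
            _ = q ^ (k+1) * qint q (n - k) * qfact q n := by rw [this]
        rw [e1, e2, qfact_succ q n, qint_split q n k hkn]; ring

lemma qbinom_D (q : ℝ) (hq : 0 ≤ q) (n k : ℕ) :
    qint q (k + 1) * qbinom q (n + 1) (k + 1) = qint q (n + 1) * qbinom q n k := by
  rcases le_or_gt k n with h | h
  · have hf := qbinom_mul_qfact q (n+1) (k+1) (by omega)
    have hg := qbinom_mul_qfact q n k h
    have h1 : n + 1 - (k + 1) = n - k := by omega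
    have hpk := qfact_pos q hq k
    have hpn := qfact_pos q hq (n - k)
    have key : qint q (k + 1) * qbinom q (n + 1) (k + 1) * (qfact q k * qfact q (n-k)) =
        qint q (n + 1) * qbinom q n k * (qfact q k * qfact q (n-k)) := by
      have : qbinom q (n+1) (k+1) * (qfact q k * qint q (k+1) * qfact q (n-k)) = qfact q (n+1) := by
        rw [← qfact_succ] at *; rw [h1] at hf; exact hf
      calc qint q (k + 1) * qbinom q (n + 1) (k + 1) * (qfact q k * qfact q (n-k))
          = qbinom q (n+1) (k+1) * (qfact q k * qint q (k+1) * qfact q (n-k)) := by ring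
        _ = qfact q (n+1) := this
        _ = qint q (n+1) * qfact q n := by rw [qfact_succ]; ring
        _ = qint q (n + 1) * qbinom q n k * (qfact q k * qfact q (n-k)) := by rw [mul_assoc, hg]
    exact mul_right_cancel₀ (by positivity) key
  · rw [qbinom_eq_zero q n k h, qbinom_eq_zero q (n+1) (k+1) (by omega)]; ring


lemma qbinom_D' (q : ℝ) (hq0 : 0 ≤ q) (hq1 : q < 1) (n k : ℕ) :
    (1 - q ^ (k + 1)) * qbinom q (n + 1) (k + 1) = (1 - q ^ (n + 1)) * qbinom q n k := by
  have hg : ∀ m : ℕ, (1 - q) * qint q m = 1 - q ^ m := by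
    intro m
    have := geom_sum_mul (q : ℝ) m
    unfold qint
    linarith
  have := congrArg (fun t => (1 - q) * t) (qbinom_D q hq0 n k)
  simp only [← mul_assoc] at this
  rw [hg] at this
  rw [mul_comm (1-q) (qint q (n+1)), mul_assoc (qint q (n+1))] at this
  rw [← mul_assoc, mul_comm (qint q (n+1)) (1-q), hg] at this
  linarith [this]


lemma qbinom_nonneg (q : ℝ) (hq : 0 ≤ q) : ∀ n k, 0 ≤ qbinom q n k := by
  intro n
  induction n with
  | zero =>
    intro k
    cases k with
    | zero => rw [qbinom_zero_right]; norm_num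
    | succ k => rw [qbinom_eq_zero q 0 (k+1) (by omega)]
  | succ n ih =>
    intro k
    cases k with
    | zero => rw [qbinom_zero_right]; norm_num
    | succ k =>
      show 0 ≤ qbinom q n k + q ^ (k + 1) * qbinom q n (k + 1)
      exact add_nonneg (ih k) (mul_nonneg (pow_nonneg hq _) (ih (k + 1)))

noncomputable def eE (θ : ℝ) (m : ℤ) : ℂ := Complex.exp ((m : ℂ) * θ * Complex.I)

lemma eE_mul (θ : ℝ) (a b : ℤ) : eE θ a * eE θ b = eE θ (a + b) := by
  unfold eE
  rw [← Complex.exp_add]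
  congr 1
  push_cast
  ring

lemma sum_step (q : ℝ) (hq0 : 0 ≤ q) (hq1 : q < 1) (θ : ℝ) (n : ℕ) :
    (eE θ 1 + eE θ (-1)) *
        (∑ k ∈ Finset.range (n + 2), (qbinom q (n + 1) k : ℂ) * eE θ ((n + 1 : ℤ) - 2 * k))
      - ((1 - q ^ (n + 1) : ℝ) : ℂ) *
        (∑ k ∈ Finset.range (n + 1), (qbinom q n k : ℂ) * eE θ ((n : ℤ) - 2 * k))
    = ∑ k ∈ Finset.range (n + 3), (qbinom q (n + 2) k : ℂ) * eE θ ((n + 2 : ℤ) - 2 * k) := by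
  -- D k = A_k - (1-q^{n+1}) B_k  (as complex)
  set D : ℕ → ℂ :=
    fun k => ((qbinom q (n + 1) k - (1 - q ^ (n + 1)) * qbinom q n k : ℝ) : ℂ) with hD
  have h1 : eE θ 1 * (∑ k ∈ Finset.range (n + 2),
        (qbinom q (n + 1) k : ℂ) * eE θ ((n + 1 : ℤ) - 2 * k))
      = ∑ k ∈ Finset.range (n + 2), (qbinom q (n + 1) k : ℂ) * eE θ ((n + 2 : ℤ) - 2 * k) := by
    rw [Finset.mul_sum]
    refine Finset.sum_congr rfl fun k _ => ?_
    rw [mul_comm (eE θ 1), mul_assoc, eE_mul]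
    congr 2
    ring
  have h2 : eE θ (-1) * (∑ k ∈ Finset.range (n + 2),
        (qbinom q (n + 1) k : ℂ) * eE θ ((n + 1 : ℤ) - 2 * k))
      = ∑ k ∈ Finset.range (n + 2), (qbinom q (n + 1) k : ℂ) * eE θ ((n : ℤ) - 2 * k) := by
    rw [Finset.mul_sum]
    refine Finset.sum_congr rfl fun k _ => ?_
    rw [mul_comm (eE θ (-1)), mul_assoc, eE_mul]
    congr 2
    ring
  have h3 : ∑ k ∈ Finset.range (n + 2),
          ((1 - q ^ (n + 1) : ℝ) : ℂ) * (qbinom q n k : ℂ) * eE θ ((n : ℤ) - 2 * k)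
      = ((1 - q ^ (n + 1) : ℝ) : ℂ) *
        (∑ k ∈ Finset.range (n + 1), (qbinom q n k : ℂ) * eE θ ((n : ℤ) - 2 * k)) := by
    rw [Finset.sum_range_succ, qbinom_eq_zero q n (n + 1) (by omega), Finset.mul_sum]
    simp [mul_assoc]
  rw [add_mul, h1, h2, ← h3]
  have h4 : ∑ k ∈ Finset.range (n + 2), (qbinom q (n + 1) k : ℂ) * eE θ ((n : ℤ) - 2 * k)
        - ∑ k ∈ Finset.range (n + 2),
            ((1 - q ^ (n + 1) : ℝ) : ℂ) * (qbinom q n k : ℂ) * eE θ ((n : ℤ) - 2 * k)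
      = ∑ k ∈ Finset.range (n + 2), D k * eE θ ((n : ℤ) - 2 * k) := by
    rw [← Finset.sum_sub_distrib]
    refine Finset.sum_congr rfl fun k _ => ?_
    rw [hD]
    push_cast
    ring
  rw [add_sub_assoc, h4]
  -- now RHS
  have hC : ∀ k : ℕ, (qbinom q (n + 2) (k + 1) : ℂ)
      = (qbinom q (n + 1) (k + 1) : ℂ) + D k := by
    intro k
    rw [hD]
    have hdef : qbinom q (n + 2) (k + 1)
        = qbinom q (n + 1) k + q ^ (k + 1) * qbinom q (n + 1) (k + 1) := rfl
    have thisC : ((1 : ℂ) - (q : ℂ) ^ (k + 1)) * (qbinom q (n + 1) (k + 1) : ℂ)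
        = (1 - (q : ℂ) ^ (n + 1)) * (qbinom q n k : ℂ) := by
      exact_mod_cast congrArg (fun r : ℝ => (r : ℂ)) (qbinom_D' q hq0 hq1 n k)
    rw [hdef]
    push_cast
    linear_combination (-(1:ℂ)) * thisC
  rw [Finset.sum_range_succ' (fun k => (qbinom q (n + 2) k : ℂ) * eE θ ((n + 2 : ℤ) - 2 * k)) (n + 2)]
  rw [Finset.sum_range_succ' (fun k => (qbinom q (n + 1) k : ℂ) * eE θ ((n + 2 : ℤ) - 2 * k)) (n + 1)]
  have hz : ∑ k ∈ Finset.range (n + 2), (qbinom q (n + 2) (k + 1) : ℂ) * eE θ ((n : ℤ) + 2 - 2 * ((k : ℤ) + 1))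
      = ∑ k ∈ Finset.range (n + 1), (qbinom q (n + 1) (k + 1) : ℂ) * eE θ ((n : ℤ) + 2 - 2 * ((k : ℤ) + 1))
        + ∑ k ∈ Finset.range (n + 2), D k * eE θ ((n : ℤ) - 2 * k) := by
    have step : ∑ k ∈ Finset.range (n + 2), (qbinom q (n + 2) (k + 1) : ℂ) * eE θ ((n : ℤ) + 2 - 2 * ((k : ℤ) + 1))
        = ∑ k ∈ Finset.range (n + 2),
            ((qbinom q (n + 1) (k + 1) : ℂ) * eE θ ((n : ℤ) + 2 - 2 * ((k : ℤ) + 1))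
              + D k * eE θ ((n : ℤ) - 2 * k)) := by
      refine Finset.sum_congr rfl fun k _ => ?_
      have e1 : ((n : ℤ) + 2 - 2 * ((k : ℤ) + 1)) = ((n : ℤ) - 2 * k) := by ring
      rw [hC k, add_mul, e1]
    rw [step, Finset.sum_add_distrib]
    congr 1
    rw [Finset.sum_range_succ, qbinom_eq_zero q (n + 1) (n + 2) (by omega)]
    norm_num
  push_cast
  rw [hz, qbinom_zero_right, qbinom_zero_right]
  push_cast
  ring


lemma qHermite_rep (q : ℝ) (hq0 : 0 ≤ q) (hq1 : q < 1) (θ : ℝ) :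
    ∀ n, (((Real.sqrt (1 - q)) ^ n * qHermite q (2 * Real.cos θ / Real.sqrt (1 - q)) n : ℝ) : ℂ)
      = ∑ k ∈ Finset.range (n + 1), (qbinom q n k : ℂ) * eE θ ((n : ℤ) - 2 * k) := by
  set s := Real.sqrt (1 - q) with hs
  have hspos : 0 < s := Real.sqrt_pos.mpr (by linarith)
  have hs2 : s ^ 2 = 1 - q := Real.sq_sqrt (by linarith)
  set x := 2 * Real.cos θ / s with hxdef
  have hsx : s * x = 2 * Real.cos θ := by
    rw [hxdef, mul_div_assoc']; exact mul_div_cancel_left₀ _ hspos.ne'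
  have hcos : ((Real.cos θ : ℝ) : ℂ) * 2 = eE θ 1 + eE θ (-1) := by
    unfold eE
    rw [Complex.ofReal_cos, mul_comm, Complex.two_cos]
    push_cast
    ring_nf
  intro n
  induction n using Nat.twoStepInduction with
  | zero =>
    simp [qHermite, qbinom_zero_right, eE]
  | one =>
    have h11 : qbinom q 1 1 = 1 := by
      show qbinom q 0 0 + q ^ 1 * qbinom q 0 1 = 1
      rw [qbinom_eq_zero q 0 1 (by omega), qbinom_zero_right]; ring
    simp only [qHermite, pow_one]
    rw [Finset.sum_range_succ, Finset.sum_range_one, h11, qbinom_zero_right]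
    have : ((s * x : ℝ) : ℂ) = ((2 * Real.cos θ : ℝ) : ℂ) := by exact_mod_cast congrArg Complex.ofReal hsx
    push_cast at this ⊢
    rw [this]
    push_cast at hcos
    simp only [one_mul]
    rw [← hcos]
    ring
  | more n ihn ihn1 =>
    have hgeom : (1 - q) * qint q (n + 1) = 1 - q ^ (n + 1) := by
      have := geom_sum_mul (q : ℝ) (n + 1)
      unfold qint
      linarith
    have hreal : s ^ (n + 2) * qHermite q x (n + 2)
        = (2 * Real.cos θ) * (s ^ (n + 1) * qHermite q x (n + 1))
          - (1 - q ^ (n + 1)) * (s ^ n * qHermite q x n) := by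
      have hrec : qHermite q x (n + 2)
          = x * qHermite q x (n + 1) - qint q (n + 1) * qHermite q x n := rfl
      rw [hrec]
      linear_combination (s ^ (n + 1) * qHermite q x (n + 1)) * hsx
        - (s ^ n * qHermite q x n) * qint q (n + 1) * hs2
        - (s ^ n * qHermite q x n) * hgeom
    have key : ((s ^ (n + 2) * qHermite q x (n + 2) : ℝ) : ℂ)
        = (eE θ 1 + eE θ (-1)) * ((s ^ (n + 1) * qHermite q x (n + 1) : ℝ) : ℂ)
          - ((1 - q ^ (n + 1) : ℝ) : ℂ) * ((s ^ n * qHermite q x n : ℝ) : ℂ) := by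
      rw [hreal, ← hcos]
      push_cast
      ring
    push_cast at key ihn ihn1 ⊢
    rw [key, ihn1, ihn]
    have := sum_step q hq0 hq1 θ n
    push_cast at this
    convert this using 3 <;> push_cast <;> ring_nf


theorem qHermite_bound (q : ℝ) (hq : 0 ≤ q ∧ q < 1) (n : ℕ) (hn : 1 ≤ n) (x : ℝ)
    (hx : |x| ≤ 2 / Real.sqrt (1 - q)) :
    |qHermite q x n| ≤ (Real.sqrt (1 - q))⁻¹ ^ n * ∑ i ∈ Finset.range (n + 1), qbinom q n i := by
  obtain ⟨hq0, hq1⟩ := hq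
  set s := Real.sqrt (1 - q) with hs
  have hspos : 0 < s := Real.sqrt_pos.mpr (by linarith)
  have hxb : -1 ≤ x * s / 2 ∧ x * s / 2 ≤ 1 := by
    have h1 : |x * s / 2| ≤ 1 := by
      rw [abs_div, abs_mul, abs_of_pos hspos]
      rw [div_le_iff₀ (by norm_num : (0:ℝ) < |(2:ℝ)|)]
      have : |x| * s ≤ (2 / s) * s := mul_le_mul_of_nonneg_right hx hspos.le
      rw [div_mul_cancel₀ 2 (ne_of_gt hspos)] at this
      simpa using this
    exact abs_le.mp h1
  set θ := Real.arccos (x * s / 2) with hθ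
  have hcosθ : Real.cos θ = x * s / 2 := Real.cos_arccos hxb.1 hxb.2
  have hx2 : 2 * Real.cos θ / s = x := by
    rw [hcosθ]; field_simp
  have hrep := qHermite_rep q hq0 hq1 θ n
  rw [hx2] at hrep
  have habs : s ^ n * |qHermite q x n|
      = ‖∑ k ∈ Finset.range (n + 1), (qbinom q n k : ℂ) * eE θ ((n : ℤ) - 2 * k)‖ := by
    rw [← hrep, Complex.norm_real, Real.norm_eq_abs, abs_mul, abs_of_nonneg (by positivity : (0:ℝ) ≤ s ^ n)]
  have hbound : ‖∑ k ∈ Finset.range (n + 1), (qbinom q n k : ℂ) * eE θ ((n : ℤ) - 2 * k)‖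
      ≤ ∑ k ∈ Finset.range (n + 1), qbinom q n k := by
    refine le_trans (norm_sum_le _ _) ?_
    refine Finset.sum_le_sum fun k _ => ?_
    rw [norm_mul]
    have heabs : ‖eE θ ((n : ℤ) - 2 * k)‖ = 1 := by
      unfold eE
      rw [show ((((n : ℤ) - 2 * k : ℤ) : ℂ) * (θ : ℂ) * Complex.I)
          = (((((n : ℤ) - 2 * k : ℤ) : ℝ) * θ : ℝ) : ℂ) * Complex.I by push_cast; ring]
      exact Complex.norm_exp_ofReal_mul_I _
    rw [heabs, mul_one, Complex.norm_real, Real.norm_eq_abs, abs_of_nonneg (qbinom_nonneg q hq0 n k)]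
  have h5 : s ^ n * |qHermite q x n| ≤ ∑ k ∈ Finset.range (n + 1), qbinom q n k := by
    rw [habs]; exact hbound
  have hspow : (0:ℝ) < s ^ n := by positivity
  calc |qHermite q x n| = (s ^ n)⁻¹ * (s ^ n * |qHermite q x n|) := by field_simp
    _ ≤ (s ^ n)⁻¹ * ∑ k ∈ Finset.range (n + 1), qbinom q n k :=
        mul_le_mul_of_nonneg_left h5 (by positivity)
    _ = (s⁻¹) ^ n * ∑ k ∈ Finset.range (n + 1), qbinom q n k := by rw [inv_pow]
end
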